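/- Let p > 2, a ∈ (0, 1/2), t > 0, and let v ∈ C²((0,a)) satisfy -v''(x) ≥ |v'(x)|^p for all x ∈ (0,a). Then v'(x) ≤ U*'(x) = ((p-1)x)^{-1/(p-1)} for all x ∈ (0,a). -/

import Mathlib

/-- If `v` is `C²` on `(0,a)` with `-v'' ≥ |v'|^p`, then `v' ≤ U*' = ((p-1)x)^{-1/(p-1)}`
on `(0,a)`. -/
theorem deriv_le_singular_profile (p a : ℝ) (hp : 2 < p) (ha : a ∈ Set.Ioo (0:ℝ) (1/2))
    (t : ℝ) (ht : 0 < t)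
    (v v' v'' : ℝ → ℝ)
    (hv : ∀ x ∈ Set.Ioo (0:ℝ) a, HasDerivAt v (v' x) x)
    (hv' : ∀ x ∈ Set.Ioo (0:ℝ) a, HasDerivAt v' (v'' x) x)
    (hineq : ∀ x ∈ Set.Ioo (0:ℝ) a, |v' x| ^ p ≤ -v'' x) :
    ∀ x ∈ Set.Ioo (0:ℝ) a, v' x ≤ ((p - 1) * x) ^ (-(1 / (p - 1))) := by
  obtain ⟨ha0, ha2⟩ := ha
  intro x₀ hx₀
  obtain ⟨hx₀0, hx₀a⟩ := hx₀
  have hq : (0:ℝ) < p - 1 := by linarith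
  have hbase : 0 < (p - 1) * x₀ := by positivity
  by_cases hw0 : v' x₀ ≤ 0
  · exact hw0.trans (Real.rpow_pos_of_pos hbase _).le
  push_neg at hw0
  -- v' is antitone on (0, a)
  have hanti : AntitoneOn v' (Set.Ioo 0 a) := by
    apply antitoneOn_of_deriv_nonpos (convex_Ioo _ _)
    · intro y hy; exact (hv' y hy).continuousAt.continuousWithinAt
    · rw [interior_Ioo]
      intro y hy
      exact (hv' y hy).differentiableAt.differentiableWithinAt
    · rw [interior_Ioo]
      intro y hy
      rw [(hv' y hy).deriv]
      have h1 := hineq y hy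
      have h2 : (0:ℝ) ≤ |v' y| ^ p := Real.rpow_nonneg (abs_nonneg _) _
      linarith
  -- positivity of v' on (0, x₀]
  have hwpos : ∀ y, 0 < y → y ≤ x₀ → 0 < v' y := by
    intro y hy0 hyx
    have hymem : y ∈ Set.Ioo (0:ℝ) a := ⟨hy0, lt_of_le_of_lt hyx hx₀a⟩
    exact lt_of_lt_of_le hw0 (hanti hymem ⟨hx₀0, hx₀a⟩ hyx)
  -- key estimate: for every x ∈ (0, x₀), (p-1)(x₀ - x) ≤ (v' x₀)^(1-p)
  have key : ∀ x, 0 < x → x < x₀ → (p - 1) * (x₀ - x) ≤ v' x₀ ^ (1 - p) := by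
    intro x hx0 hxx₀
    set ψ : ℝ → ℝ := fun y => v' y ^ (1 - p) - (p - 1) * y with hψ
    have hmem : ∀ y ∈ Set.Icc x x₀, y ∈ Set.Ioo (0:ℝ) a := by
      intro y hy
      exact ⟨lt_of_lt_of_le hx0 hy.1, lt_of_le_of_lt hy.2 hx₀a⟩
    have hpos : ∀ y ∈ Set.Icc x x₀, 0 < v' y := fun y hy =>
      hwpos y (lt_of_lt_of_le hx0 hy.1) hy.2
    have hasψ : ∀ y ∈ Set.Icc x x₀,
        HasDerivAt ψ (v'' y * (1 - p) * v' y ^ (-p) - (p - 1)) y := by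
      intro y hy
      have hb := hpos y hy
      have h1 : HasDerivAt (fun z => v' z ^ (1 - p))
          (v'' y * (1 - p) * v' y ^ (1 - p - 1)) y :=
        (hv' y (hmem y hy)).rpow_const (Or.inl hb.ne')
      have h2 : (1 : ℝ) - p - 1 = -p := by ring
      rw [h2] at h1
      refine ((h1.sub ((hasDerivAt_id y).const_mul (p - 1))).congr_deriv (by ring)).congr_of_eventuallyEq ?_
      exact Filter.Eventually.of_forall fun z => by simp [hψ]
    have hderiv_nonneg : ∀ y ∈ Set.Icc x x₀,
        0 ≤ v'' y * (1 - p) * v' y ^ (-p) - (p - 1) := by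
      intro y hy
      have hb := hpos y hy
      have hineq' := hineq y (hmem y hy)
      rw [abs_of_pos hb] at hineq'
      have hbp : 0 < v' y ^ (-p) := Real.rpow_pos_of_pos hb _
      have hcancel : v' y ^ p * v' y ^ (-p) = 1 := by
        rw [← Real.rpow_add hb]; simp
      have h3 : v' y ^ p * v' y ^ (-p) ≤ (-v'' y) * v' y ^ (-p) :=
        mul_le_mul_of_nonneg_right hineq' hbp.le
      rw [hcancel] at h3
      nlinarith
    have hmono : MonotoneOn ψ (Set.Icc x x₀) := by
      apply monotoneOn_of_deriv_nonneg (convex_Icc _ _)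
      · intro y hy; exact (hasψ y hy).continuousAt.continuousWithinAt
      · rw [interior_Icc]
        intro y hy
        exact (hasψ y (Set.mem_Icc_of_Ioo hy)).differentiableAt.differentiableWithinAt
      · rw [interior_Icc]
        intro y hy
        rw [(hasψ y (Set.mem_Icc_of_Ioo hy)).deriv]
        exact hderiv_nonneg y (Set.mem_Icc_of_Ioo hy)
    have hle : ψ x ≤ ψ x₀ :=
      hmono ⟨le_refl x, hxx₀.le⟩ ⟨hxx₀.le, le_refl x₀⟩ hxx₀.le
    have hxnn : 0 ≤ v' x ^ (1 - p) :=
      Real.rpow_nonneg (hpos x ⟨le_refl x, hxx₀.le⟩).le _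
    simp only [hψ] at hle
    linarith
  -- pass to the limit x → 0⁺
  have hfin : (p - 1) * x₀ ≤ v' x₀ ^ (1 - p) := by
    by_contra h
    push_neg at h
    set ε : ℝ := ((p - 1) * x₀ - v' x₀ ^ (1 - p)) / (p - 1) with hε
    have hε0 : 0 < ε := by
      apply div_pos _ hq; linarith
    set x : ℝ := min (x₀ / 2) (ε / 2) with hx
    have hx0 : 0 < x := lt_min (by linarith) (by linarith)
    have hxx₀ : x < x₀ := lt_of_le_of_lt (min_le_left _ _) (by linarith)
    have hkey := key x hx0 hxx₀
    have hxε : x < ε := lt_of_le_of_lt (min_le_right _ _) (by linarith)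
    have : (p - 1) * ε = (p - 1) * x₀ - v' x₀ ^ (1 - p) := by
      rw [hε]; field_simp
    nlinarith
  -- conclude using the antitonicity of rpow in the base for negative exponents
  have h1p : (1 : ℝ) - p = -(p - 1) := by ring
  rw [h1p] at hfin
  have hz : -(1 / (p - 1)) ≤ 0 := by
    rw [neg_nonpos]; positivity
  have h4 : (v' x₀ ^ (-(p - 1))) ^ (-(1 / (p - 1))) ≤ ((p - 1) * x₀) ^ (-(1 / (p - 1))) :=
    Real.rpow_le_rpow_of_nonpos hbase hfin hz
  have h5 : (v' x₀ ^ (-(p - 1))) ^ (-(1 / (p - 1))) = v' x₀ := by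
    rw [← Real.rpow_mul hw0.le]
    have : -(p - 1) * -(1 / (p - 1)) = 1 := by
      field_simp
    rw [this, Real.rpow_one]
  rwa [h5] at h4
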